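/- Let X be a complete normed vector space (over ℝ or ℂ), let Ψ : [1,∞) → X, let M ∈ ℕ, c ≥ 0, and let ε₁,…,ε_M, η₁,…,η_M be real numbers with η_i > 2ε_i ≥ 0 for every i ∈ {1,…,M}. Assume that for all t₁, t₂ with 1 < t₁ ≤ t₂ one has ‖Ψ(t₂) − Ψ(t₁)‖ ≤ c · Σ_{i=1}^{M} t₂^{ε_i} / t₁^{η_i}. Then Ψ(t) converges in X as t → ∞, i.e. there exists Ψ⁺ ∈ X with lim_{t→∞} ‖Ψ(t) − Ψ⁺‖ = 0. -/

import Mathlib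

open Filter Real

/-- Telescopic convergence argument (proof of Theorem 2.2): if the differences of the
approximating vectors satisfy `‖Ψ t₂ - Ψ t₁‖ ≤ c * ∑ i, t₂ ^ ε i / t₁ ^ η i` with
`η i > 2 * ε i ≥ 0`, then `Ψ t` converges as `t → ∞`. -/
theorem telescopic_convergence {X : Type*} [NormedAddCommGroup X] [NormedSpace ℝ X]
    [CompleteSpace X] (Ψ : ℝ → X) (M : ℕ) (c : ℝ) (hc : 0 ≤ c)
    (ε η : Fin M → ℝ) (hε : ∀ i, 0 ≤ ε i) (hη : ∀ i, 2 * ε i < η i)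
    (hdiff : ∀ t₁ t₂ : ℝ, 1 < t₁ → t₁ ≤ t₂ →
      ‖Ψ t₂ - Ψ t₁‖ ≤ c * ∑ i, t₂ ^ ε i / t₁ ^ η i) :
    ∃ Ψplus : X, Filter.Tendsto (fun t => ‖Ψ t - Ψplus‖) Filter.atTop (nhds 0) := by
  set a : ℕ → ℝ := fun n => 2 ^ (2 ^ n : ℕ) with ha_def
  have ha1 : ∀ n, (1:ℝ) < a n := fun n =>
    one_lt_pow₀ one_lt_two (Nat.two_pow_pos n).ne'
  have ha0 : ∀ n, (0:ℝ) < a n := fun n => lt_trans one_pos (ha1 n)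
  have ha_mono : Monotone a := fun m n h =>
    pow_le_pow_right₀ one_le_two (Nat.pow_le_pow_right (by norm_num) h)
  have ha_succ : ∀ n, a (n + 1) = (a n) ^ 2 := by
    intro n
    simp only [ha_def]
    rw [pow_succ, pow_mul]
  have ha_top : Tendsto a atTop atTop := by
    refine tendsto_atTop_mono (fun n => ?_)
      (tendsto_pow_atTop_atTop_of_one_lt (one_lt_two : (1:ℝ) < 2))
    exact pow_le_pow_right₀ one_le_two (Nat.lt_two_pow_self (n := n)).le
  -- the geometric-type rates
  set r : Fin M → ℝ := fun i => (2:ℝ) ^ (2 * ε i - η i) with hr_def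
  have hr0 : ∀ i, 0 < r i := fun i => rpow_pos_of_pos two_pos _
  have hr1 : ∀ i, r i < 1 := fun i =>
    rpow_lt_one_of_one_lt_of_neg one_lt_two (by linarith [hη i])
  have key : ∀ (n : ℕ) (i : Fin M), a n ^ (2 * ε i - η i) = r i ^ (2 ^ n : ℕ) := by
    intro n i
    have h1 : a n = (2:ℝ) ^ ((2 ^ n : ℕ) : ℝ) := (rpow_natCast 2 _).symm
    rw [h1, ← rpow_natCast (r i) (2 ^ n), hr_def, ← rpow_mul (by norm_num : (0:ℝ) ≤ 2),
      ← rpow_mul (by norm_num : (0:ℝ) ≤ 2), mul_comm]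
  set S : ℕ → ℝ := fun n => ∑ i, r i ^ (2 ^ n : ℕ) with hS_def
  have hS0 : ∀ n, 0 ≤ S n := fun n =>
    Finset.sum_nonneg fun i _ => pow_nonneg (hr0 i).le _
  -- main difference bound  
  have hb : ∀ (n : ℕ) (t : ℝ), a n ≤ t → t ≤ a (n + 1) →
      ‖Ψ (a (n + 1)) - Ψ t‖ ≤ c * S n := by
    intro n t h1 h2
    have ht1 : 1 < t := lt_of_lt_of_le (ha1 n) h1
    refine (hdiff t (a (n + 1)) ht1 h2).trans ?_
    refine mul_le_mul_of_nonneg_left (Finset.sum_le_sum fun i _ => ?_) hc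
    have h2e : a (n + 1) ^ ε i = a n ^ (2 * ε i) := by
      rw [ha_succ, ← rpow_natCast (a n) 2, ← rpow_mul (ha0 n).le]
      norm_num
    rw [h2e]
    have : a n ^ (2 * ε i) / t ^ η i ≤ a n ^ (2 * ε i) / a n ^ η i :=
      div_le_div_of_nonneg_left (rpow_nonneg (ha0 n).le _) (rpow_pos_of_pos (ha0 n) _)
        (rpow_le_rpow (ha0 n).le h1 (by linarith [hη i, hε i]))
    refine this.trans ?_
    rw [← rpow_sub (ha0 n), key n i]
  -- summability
  have hsum : Summable S := by
    refine summable_sum fun i _ => ?_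
    refine Summable.of_nonneg_of_le (fun n => pow_nonneg (hr0 i).le _) (fun n => ?_)
      (summable_geometric_of_lt_one (hr0 i).le (hr1 i))
    exact pow_le_pow_of_le_one (hr0 i).le (hr1 i).le (Nat.lt_two_pow_self (n := n)).le
  -- Cauchy of the subsequence
  have hcau : CauchySeq (fun n => Ψ (a n)) := by
    refine cauchySeq_of_summable_dist ?_
    refine Summable.of_nonneg_of_le (fun n => dist_nonneg) (fun n => ?_) (hsum.mul_left c)
    rw [dist_eq_norm, norm_sub_rev]
    exact hb n (a n) le_rfl (ha_mono (Nat.le_succ n))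
  obtain ⟨L, hL⟩ := cauchySeq_tendsto_of_complete hcau
  refine ⟨L, ?_⟩
  -- S → 0
  have hSto : Tendsto (fun n => c * S n) atTop (nhds 0) := by
    have : Tendsto S atTop (nhds 0) := by
      have h0 : (0:ℝ) = ∑ i : Fin M, (0:ℝ) := by simp
      rw [h0]
      refine tendsto_finset_sum _ fun i _ => ?_
      exact (tendsto_pow_atTop_nhds_zero_of_lt_one (hr0 i).le (hr1 i)).comp
        (tendsto_pow_atTop_atTop_of_one_lt (one_lt_two : (1:ℕ) < 2))
    simpa using this.const_mul c
  rw [Metric.tendsto_atTop]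
  intro δ hδ
  obtain ⟨N₁, hN₁⟩ := (Metric.tendsto_atTop.mp hL) (δ / 2) (by linarith)
  obtain ⟨N₂, hN₂⟩ := (Metric.tendsto_atTop.mp hSto) (δ / 2) (by linarith)
  set N := max N₁ N₂ with hN
  refine ⟨a N, fun t ht => ?_⟩
  have hex : ∃ m, t < a m := (ha_top.eventually_gt_atTop t).exists
  set m := Nat.find hex with hm_def
  have hm : t < a m := Nat.find_spec hex
  have hNm : N < m := by
    by_contra h
    push_neg at h
    exact absurd (le_trans (ha_mono h) ht) (not_le.mpr hm)
  set n := m - 1 with hn_def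
  have hmn : m = n + 1 := by omega
  have han : a n ≤ t := by
    by_contra h
    push_neg at h
    exact Nat.find_min hex (by omega) h
  have hnN : N ≤ n := by omega
  have hkey : ‖Ψ t - L‖ < δ := by
    have h1 : ‖Ψ t - L‖ ≤ ‖Ψ (a m) - Ψ t‖ + ‖Ψ (a m) - L‖ := by
      have := norm_sub_le (Ψ t - Ψ (a m)) (L - Ψ (a m))
      simp only [sub_sub_sub_cancel_right] at this
      calc ‖Ψ t - L‖ ≤ ‖Ψ t - Ψ (a m)‖ + ‖Ψ (a m) - L‖ := norm_sub_le_norm_sub_add_norm_sub _ _ _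
        _ = ‖Ψ (a m) - Ψ t‖ + ‖Ψ (a m) - L‖ := by rw [norm_sub_rev (Ψ t)]
    have h2 : ‖Ψ (a m) - Ψ t‖ ≤ c * S n := by
      rw [hmn]; exact hb n t han (by rw [← hmn]; exact hm.le)
    have h3 : c * S n < δ / 2 := by
      have := hN₂ n (le_trans (le_max_right N₁ N₂) hnN)
      rw [Real.dist_eq, sub_zero] at this
      calc c * S n ≤ |c * S n| := le_abs_self _
        _ < δ / 2 := this
    have h4 : ‖Ψ (a m) - L‖ < δ / 2 := by
      have := hN₁ m (le_trans (le_max_left N₁ N₂) (le_of_lt hNm))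
      rwa [dist_eq_norm] at this
    linarith
  rw [Real.dist_eq, sub_zero, abs_of_nonneg (norm_nonneg _)]
  exact hkey
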